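/- Let π : (X, T₁,…,T_d) → (Y, S₁,…,S_d) be a proximal extension between minimal ℤ^d-systems, and let R ⊆ ℤ^d be a set of recurrence for (Y, S₁,…,S_d). Then R is a set of recurrence for (X, T₁,…,T_d). -/

import Mathlib

open scoped BigOperators

noncomputable section

/-- The composition `T₁^{n₁} ∘ ⋯ ∘ T_d^{n_d}`. -/
def zpowProd {X : Type*} {d : ℕ} (T : Fin d → Equiv.Perm X) (n : Fin d → ℤ) :
    Equiv.Perm X :=
  (List.ofFn fun i => T i ^ n i).prod

/-- `R ⊆ ℤ^d` is a set of recurrence for the system given by the commuting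
homeomorphisms `T₁, …, T_d`: for every nonempty open `U` there is `n ∈ R` with
`U ∩ T₁^{-n₁}⋯T_d^{-n_d} U ≠ ∅`. -/
def IsRecurrenceSet {X : Type*} [TopologicalSpace X] {d : ℕ}
    (T : Fin d → Equiv.Perm X) (R : Set (Fin d → ℤ)) : Prop :=
  ∀ U : Set X, IsOpen U → U.Nonempty → ∃ n ∈ R, (U ∩ zpowProd T (-n) '' U).Nonempty

/-- The system is minimal: every orbit is dense. -/
def IsMinimalSystem {X : Type*} [TopologicalSpace X] {d : ℕ}
    (T : Fin d → Equiv.Perm X) : Prop :=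
  ∀ x : X, Dense (Set.range fun n : Fin d → ℤ => zpowProd T n x)

section Aux

variable {X Y : Type*} {d : ℕ}

lemma zpowProd_zero_d (T : Fin 0 → Equiv.Perm X) (n : Fin 0 → ℤ) : zpowProd T n = 1 := by
  simp [zpowProd]

lemma zpowProd_succ {d : ℕ} (T : Fin (d+1) → Equiv.Perm X) (n : Fin (d+1) → ℤ) :
    zpowProd T n = (T 0 ^ n 0) * zpowProd (fun i => T i.succ) (fun i => n i.succ) := by
  simp [zpowProd, List.ofFn_succ]

lemma zpowProd_add (T : Fin d → Equiv.Perm X) (hcomm : ∀ i j, Commute (T i) (T j))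
    (m n : Fin d → ℤ) : zpowProd T (m + n) = zpowProd T m * zpowProd T n := by
  induction d with
  | zero => simp [zpowProd_zero_d]
  | succ d ih =>
    rw [zpowProd_succ, zpowProd_succ, zpowProd_succ]
    have htail : (fun i : Fin d => (m + n) i.succ)
        = (fun i : Fin d => m i.succ) + (fun i : Fin d => n i.succ) := rfl
    rw [htail, ih (fun i => T i.succ) (fun i j => hcomm i.succ j.succ)]
    have hc : Commute (zpowProd (fun i : Fin d => T i.succ) (fun i : Fin d => m i.succ))
        (T 0 ^ n 0) := by
      apply Commute.list_prod_left
      intro x hx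
      obtain ⟨i, rfl⟩ := List.mem_ofFn.mp hx
      exact (hcomm i.succ 0).zpow_zpow _ _
    have h0 : (m + n) 0 = m 0 + n 0 := rfl
    rw [h0, zpow_add, mul_assoc, mul_assoc]
    congr 1
    rw [← mul_assoc, ← hc.eq, mul_assoc]

lemma zpowProd_apply_add (T : Fin d → Equiv.Perm X) (hcomm : ∀ i j, Commute (T i) (T j))
    (m n : Fin d → ℤ) (x : X) :
    zpowProd T m (zpowProd T n x) = zpowProd T (m + n) x := by
  rw [zpowProd_add T hcomm m n, Equiv.Perm.mul_apply]

lemma zpowProd_zero (T : Fin d → Equiv.Perm X) : zpowProd T 0 = 1 := by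
  induction d with
  | zero => simp [zpowProd_zero_d]
  | succ d ih =>
    rw [zpowProd_succ]
    have : (zpowProd (fun i : Fin d => T i.succ) fun _ => (0:ℤ)) = 1 := ih _
    simp [this]

lemma zpowProd_swap (T : Fin d → Equiv.Perm X) (hcomm : ∀ i j, Commute (T i) (T j))
    (m n : Fin d → ℤ) (x : X) :
    zpowProd T m (zpowProd T n x) = zpowProd T n (zpowProd T m x) := by
  rw [zpowProd_apply_add T hcomm, zpowProd_apply_add T hcomm, add_comm]

lemma zpowProd_neg_apply (T : Fin d → Equiv.Perm X) (hcomm : ∀ i j, Commute (T i) (T j))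
    (n : Fin d → ℤ) (x : X) : zpowProd T (-n) (zpowProd T n x) = x := by
  rw [zpowProd_apply_add T hcomm, neg_add_cancel, zpowProd_zero, Equiv.Perm.one_apply]

lemma continuous_perm_zpow [TopologicalSpace X] (e : Equiv.Perm X)
    (h1 : Continuous e) (h2 : Continuous e.symm) (k : ℤ) : Continuous ⇑(e ^ k) := by
  induction k using Int.induction_on with
  | zero => simp only [zpow_zero]; exact continuous_id'
  | succ k ihk =>
    have h : (e ^ ((k : ℤ) + 1)) = e ^ (k : ℤ) * e := by rw [zpow_add_one]
    rw [h]
    have h' : ⇑(e ^ (k : ℤ) * e) = ⇑(e ^ (k : ℤ)) ∘ ⇑e := rfl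
    rw [h']; exact ihk.comp h1
  | pred k ihk =>
    have h : (e ^ (-(k : ℤ) - 1)) = e ^ (-(k : ℤ)) * e⁻¹ := by rw [zpow_sub_one]
    rw [h]
    have h3 : ⇑(e ^ (-(k : ℤ)) * e⁻¹) = ⇑(e ^ (-(k : ℤ))) ∘ ⇑e.symm := by
      rw [Equiv.Perm.inv_def]; rfl
    rw [h3]; exact ihk.comp h2

lemma continuous_permList_prod [TopologicalSpace X] (l : List (Equiv.Perm X))
    (h : ∀ e ∈ l, Continuous ⇑e) : Continuous ⇑l.prod := by
  induction l with
  | nil => simpa using continuous_id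
  | cons a l ih =>
    rw [List.prod_cons]
    have h' : ⇑(a * l.prod) = ⇑a ∘ ⇑l.prod := rfl
    rw [h']
    exact (h a List.mem_cons_self).comp (ih fun e he => h e (List.mem_cons_of_mem a he))

lemma continuous_zpowProd [TopologicalSpace X] (T : Fin d → Equiv.Perm X)
    (hc : ∀ i, Continuous (T i)) (hc' : ∀ i, Continuous (T i).symm) (n : Fin d → ℤ) :
    Continuous ⇑(zpowProd T n) := by
  apply continuous_permList_prod
  intro e he
  obtain ⟨i, rfl⟩ := List.mem_ofFn.mp he
  exact continuous_perm_zpow (T i) (hc i) (hc' i) (n i)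

lemma pi_zpow (π : X → Y) (e : Equiv.Perm X) (f : Equiv.Perm Y)
    (hfac : ∀ x, π (e x) = f (π x)) (k : ℤ) (x : X) :
    π ((e ^ k) x) = (f ^ k) (π x) := by
  have hinv : ∀ x, π (e⁻¹ x) = f⁻¹ (π x) := by
    intro x
    have h := hfac (e⁻¹ x)
    rw [Equiv.Perm.inv_def, Equiv.Perm.inv_def] at *
    rw [Equiv.apply_symm_apply] at h
    rw [h, Equiv.symm_apply_apply]
  induction k using Int.induction_on generalizing x with
  | zero => simp
  | succ k ihk =>
    have h1 : (e ^ ((k:ℤ)+1)) x = (e ^ (k:ℤ)) (e x) := by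
      rw [zpow_add_one, Equiv.Perm.mul_apply]
    have h2 : (f ^ ((k:ℤ)+1)) (π x) = (f ^ (k:ℤ)) (f (π x)) := by
      rw [zpow_add_one, Equiv.Perm.mul_apply]
    rw [h1, h2, ihk, hfac]
  | pred k ihk =>
    have h1 : (e ^ (-(k:ℤ)-1)) x = (e ^ (-(k:ℤ))) (e⁻¹ x) := by
      rw [zpow_sub_one, Equiv.Perm.mul_apply]
    have h2 : (f ^ (-(k:ℤ)-1)) (π x) = (f ^ (-(k:ℤ))) (f⁻¹ (π x)) := by
      rw [zpow_sub_one, Equiv.Perm.mul_apply]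
    rw [h1, h2, ihk, hinv]

lemma pi_zpowProd (π : X → Y) (T : Fin d → Equiv.Perm X) (S : Fin d → Equiv.Perm Y)
    (hfac : ∀ i x, π (T i x) = S i (π x)) (n : Fin d → ℤ) (x : X) :
    π (zpowProd T n x) = zpowProd S n (π x) := by
  induction d generalizing x with
  | zero => rw [zpowProd_zero_d, zpowProd_zero_d]; rfl
  | succ d ih =>
    rw [zpowProd_succ, zpowProd_succ, Equiv.Perm.mul_apply, Equiv.Perm.mul_apply]
    rw [pi_zpow π (T 0) (S 0) (hfac 0)]
    rw [ih (fun i => T i.succ) (fun i => S i.succ) (fun i x => hfac i.succ x)]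

lemma usc_fiber [MetricSpace X] [CompactSpace X] [MetricSpace Y]
    (π : X → Y) (hc : Continuous π) (ystar : Y) (η : ℝ) (hη : 0 < η) :
    ∃ ρ > 0, ∀ x : X, dist (π x) ystar < ρ → ∃ a, π a = ystar ∧ dist x a < η := by
  set C : Set X := {x | ∀ a, π a = ystar → η ≤ dist x a} with hC
  have hCclosed : IsClosed C := by
    have h : C = ⋂ (a : X) (_ : π a = ystar), {x | η ≤ dist x a} := by
      ext x; simp [hC]
    rw [h]
    exact isClosed_iInter fun a => isClosed_iInter fun _ =>
      isClosed_le continuous_const (continuous_id.dist continuous_const)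
  have hKc : IsCompact (π '' C) := (hCclosed.isCompact).image hc
  have hys : ystar ∉ π '' C := by
    rintro ⟨x, hxC, hx⟩
    have h2 := hxC x hx
    simp only [dist_self] at h2
    exact absurd (lt_of_lt_of_le hη h2) (lt_irrefl 0)
  have hopen : IsOpen (π '' C)ᶜ := hKc.isClosed.isOpen_compl
  obtain ⟨ρ, hρ, hball⟩ := Metric.isOpen_iff.mp hopen ystar hys
  refine ⟨ρ, hρ, fun x hx => ?_⟩
  have hmem : π x ∈ (π '' C)ᶜ := hball (Metric.mem_ball.mpr hx)
  have hxnC : x ∉ C := fun h => hmem ⟨x, h, rfl⟩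
  simp only [hC, Set.mem_setOf_eq, not_forall, not_le] at hxnC
  obtain ⟨a, ha, hd⟩ := hxnC
  exact ⟨a, ha, hd⟩

lemma minimal_near [MetricSpace X] (T : Fin d → Equiv.Perm X)
    (hmin : IsMinimalSystem T) (x x₀ : X) (r : ℝ) (hr : 0 < r) :
    ∃ m : Fin d → ℤ, dist (zpowProd T m x) x₀ < r := by
  obtain ⟨p, hp, hpb⟩ := (hmin x).exists_mem_open Metric.isOpen_ball
    ⟨x₀, Metric.mem_ball_self hr⟩
  obtain ⟨m, rfl⟩ := hp
  exact ⟨m, Metric.mem_ball.mp hpb⟩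

lemma prox_to_target [MetricSpace X] [CompactSpace X]
    (T : Fin d → Equiv.Perm X)
    (hT_cont : ∀ i, Continuous (T i)) (hT_cont_symm : ∀ i, Continuous (T i).symm)
    (hT_comm : ∀ i j, Commute (T i) (T j))
    (hminX : IsMinimalSystem T)
    (a b : X) (ns : ℕ → (Fin d → ℤ))
    (htend : Filter.Tendsto
      (fun k => dist (zpowProd T (ns k) a) (zpowProd T (ns k) b)) Filter.atTop (nhds 0))
    (x₀ : X) (r : ℝ) (hr : 0 < r) :
    ∃ m, dist (zpowProd T m a) x₀ < r ∧ dist (zpowProd T m b) x₀ < r := by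
  obtain ⟨w, -, φ, hφ, hpw⟩ := isCompact_univ.tendsto_subseq
    (x := fun k => zpowProd T (ns k) a) (fun k => Set.mem_univ _)
  have hqw : Filter.Tendsto (fun k => zpowProd T (ns (φ k)) b) Filter.atTop (nhds w) :=
    Filter.Tendsto.congr_dist hpw (htend.comp hφ.tendsto_atTop)
  obtain ⟨m, hm⟩ := minimal_near T hminX w x₀ (r/2) (by linarith)
  have hcont := continuous_zpowProd T hT_cont hT_cont_symm m
  have h1 : Filter.Tendsto (fun k => zpowProd T m (zpowProd T (ns (φ k)) a))
      Filter.atTop (nhds (zpowProd T m w)) := (hcont.tendsto w).comp hpw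
  have h2 : Filter.Tendsto (fun k => zpowProd T m (zpowProd T (ns (φ k)) b))
      Filter.atTop (nhds (zpowProd T m w)) := (hcont.tendsto w).comp hqw
  have e1 := (Metric.tendsto_nhds.mp h1) (r/2) (by linarith)
  have e2 := (Metric.tendsto_nhds.mp h2) (r/2) (by linarith)
  obtain ⟨k, hk1, hk2⟩ := (e1.and e2).exists
  refine ⟨m + ns (φ k), ?_, ?_⟩
  · rw [← zpowProd_apply_add T hT_comm]
    calc dist (zpowProd T m (zpowProd T (ns (φ k)) a)) x₀
        ≤ dist (zpowProd T m (zpowProd T (ns (φ k)) a)) (zpowProd T m w)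
          + dist (zpowProd T m w) x₀ := dist_triangle _ _ _
      _ < r/2 + r/2 := add_lt_add hk1 hm
      _ = r := by ring
  · rw [← zpowProd_apply_add T hT_comm]
    calc dist (zpowProd T m (zpowProd T (ns (φ k)) b)) x₀
        ≤ dist (zpowProd T m (zpowProd T (ns (φ k)) b)) (zpowProd T m w)
          + dist (zpowProd T m w) x₀ := dist_triangle _ _ _
      _ < r/2 + r/2 := add_lt_add hk2 hm
      _ = r := by ring

end Aux

/-- Proximal extensions lift recurrence. -/
theorem proximal_extension_lifts_recurrence
    (d : ℕ) (X Y : Type*) [MetricSpace X] [CompactSpace X] [MetricSpace Y] [CompactSpace Y]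
    (T : Fin d → Equiv.Perm X) (S : Fin d → Equiv.Perm Y)
    (hT_cont : ∀ i, Continuous (T i)) (hT_cont_symm : ∀ i, Continuous (T i).symm)
    (hT_comm : ∀ i j, Commute (T i) (T j))
    (hS_cont : ∀ i, Continuous (S i)) (hS_cont_symm : ∀ i, Continuous (S i).symm)
    (hS_comm : ∀ i j, Commute (S i) (S j))
    (hminX : IsMinimalSystem T) (hminY : IsMinimalSystem S)
    (π : X → Y) (hπ_cont : Continuous π) (hπ_surj : Function.Surjective π)
    (hπ_factor : ∀ i x, π (T i x) = S i (π x))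
    (hprox : ∀ x₁ x₂ : X, π x₁ = π x₂ → ∃ ns : ℕ → (Fin d → ℤ),
      Filter.Tendsto
        (fun k => dist (zpowProd T (ns k) x₁) (zpowProd T (ns k) x₂))
        Filter.atTop (nhds 0))
    (R : Set (Fin d → ℤ)) (hR : IsRecurrenceSet S R) :
    IsRecurrenceSet T R := by
  intro U hU hUne
  obtain ⟨x₀, hx₀U⟩ := hUne
  obtain ⟨ε, hε, hballU⟩ := Metric.isOpen_iff.mp hU x₀ hx₀U
  -- Step 1: finite cover of X by preimages of the ball of radius ε/2
  have hVopen : ∀ m : Fin d → ℤ, IsOpen (⇑(zpowProd T m) ⁻¹' Metric.ball x₀ (ε/2)) :=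
    fun m => Metric.isOpen_ball.preimage (continuous_zpowProd T hT_cont hT_cont_symm m)
  have hcover : (Set.univ : Set X) ⊆ ⋃ m, ⇑(zpowProd T m) ⁻¹' Metric.ball x₀ (ε/2) := by
    intro x _
    obtain ⟨m, hm⟩ := minimal_near T hminX x x₀ (ε/2) (by linarith)
    exact Set.mem_iUnion.mpr ⟨m, Metric.mem_ball.mpr hm⟩
  obtain ⟨F, hF⟩ := isCompact_univ.elim_finite_subcover _ hVopen hcover
  have hFne : F.Nonempty := by
    have h := hF (Set.mem_univ x₀)
    rw [Set.mem_iUnion₂] at h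
    obtain ⟨m, hmF, -⟩ := h
    exact ⟨m, hmF⟩
  -- Step 2: uniform continuity moduli
  have hδex : ∀ m : Fin d → ℤ, ∃ δ, 0 < δ ∧ ∀ p q : X, dist p q < δ →
      dist (zpowProd T m p) (zpowProd T m q) < ε/2 := by
    intro m
    obtain ⟨δ, hδ, h⟩ := Metric.uniformContinuous_iff.mp
      (CompactSpace.uniformContinuous_of_continuous
        (continuous_zpowProd T hT_cont hT_cont_symm m)) (ε/2) (by linarith)
    exact ⟨δ, hδ, fun p q hpq => h hpq⟩
  choose δf hδpos hδ using hδex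
  set δ₀ := F.inf' hFne δf with hδ₀def
  have hδ₀pos : 0 < δ₀ := (Finset.lt_inf'_iff hFne).mpr fun m _ => hδpos m
  -- Step 3: fiber over ystar and the key finite family of group elements
  set ystar := π x₀ with hystar
  set K : Set (X × X) := (π ⁻¹' {ystar}) ×ˢ (π ⁻¹' {ystar}) with hK
  have hKcl : IsClosed K :=
    (isClosed_singleton.preimage hπ_cont).prod (isClosed_singleton.preimage hπ_cont)
  have hKcompact : IsCompact K := hKcl.isCompact
  have hpair : ∀ p : ↥K, ∃ m, dist (zpowProd T m (p : X × X).1) x₀ < δ₀/2 ∧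
      dist (zpowProd T m (p : X × X).2) x₀ < δ₀/2 := by
    rintro ⟨⟨a, b⟩, ha, hb⟩
    have hab : π a = π b := by
      simp only [Set.mem_preimage, Set.mem_singleton_iff] at ha hb
      rw [ha, hb]
    obtain ⟨ns, htend⟩ := hprox a b hab
    exact prox_to_target T hT_cont hT_cont_symm hT_comm hminX a b ns htend x₀ (δ₀/2)
      (by linarith)
  choose mfun hm1 hm2 using hpair
  set W : ↥K → Set (X × X) := fun i =>
    (fun q : X × X => (zpowProd T (mfun i) q.1, zpowProd T (mfun i) q.2)) ⁻¹'
      (Metric.ball x₀ (δ₀/2) ×ˢ Metric.ball x₀ (δ₀/2)) with hW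
  have hWopen : ∀ i, IsOpen (W i) := fun i =>
    (Metric.isOpen_ball.prod Metric.isOpen_ball).preimage
      (((continuous_zpowProd T hT_cont hT_cont_symm (mfun i)).comp continuous_fst).prodMk
        ((continuous_zpowProd T hT_cont hT_cont_symm (mfun i)).comp continuous_snd))
  have hKW : K ⊆ ⋃ i, W i := by
    intro p hp
    refine Set.mem_iUnion.mpr ⟨⟨p, hp⟩, ?_⟩
    simp only [hW, Set.mem_preimage, Set.mem_prod, Metric.mem_ball]
    exact ⟨hm1 ⟨p, hp⟩, hm2 ⟨p, hp⟩⟩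
  obtain ⟨G, hG⟩ := hKcompact.elim_finite_subcover W hWopen hKW
  have hOopen : IsOpen (⋃ i ∈ G, W i) := isOpen_biUnion fun i _ => hWopen i
  obtain ⟨η, hη, hthick⟩ := hKcompact.exists_thickening_subset_open hOopen hG
  -- Step 4: upper semicontinuity of the fiber
  obtain ⟨ρ, hρ, husc⟩ := usc_fiber π hπ_cont ystar η hη
  -- Step 5: recurrence in Y
  obtain ⟨n, hnR, hrec⟩ := hR (Metric.ball ystar ρ) Metric.isOpen_ball
    ⟨ystar, Metric.mem_ball_self hρ⟩
  obtain ⟨y, hyball, y', hy'ball, hy'⟩ := hrec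
  -- y = S^{-n} y', both y, y' in the ball
  obtain ⟨x₁, hx₁⟩ := hπ_surj y
  have hSny : zpowProd S n y = y' := by
    rw [← hy']
    have h := zpowProd_neg_apply S hS_comm (-n) y'
    rw [neg_neg] at h
    exact h
  have hπTn : π (zpowProd T n x₁) = y' := by
    rw [pi_zpowProd π T S hπ_factor, hx₁, hSny]
  -- Step 6: both x₁ and T^n x₁ are η-close to the fiber over ystar
  obtain ⟨a, haf, hda⟩ := husc x₁ (by rw [hx₁]; exact Metric.mem_ball.mp hyball)
  obtain ⟨b, hbf, hdb⟩ := husc (zpowProd T n x₁)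
    (by rw [hπTn]; exact Metric.mem_ball.mp hy'ball)
  have habK : ((a, b) : X × X) ∈ K := by
    constructor <;> simp [Set.mem_preimage, haf, hbf]
  have hmemO : ((x₁, zpowProd T n x₁) : X × X) ∈ ⋃ i ∈ G, W i := by
    apply hthick
    refine Metric.mem_thickening_iff.mpr ⟨(a, b), habK, ?_⟩
    rw [Prod.dist_eq]
    exact max_lt hda hdb
  rw [Set.mem_iUnion₂] at hmemO
  obtain ⟨i, hiG, hiW⟩ := hmemO
  simp only [hW, Set.mem_preimage, Set.mem_prod, Metric.mem_ball] at hiW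
  obtain ⟨hi1, hi2⟩ := hiW
  -- Step 7: the almost-returning point z
  set z := zpowProd T (mfun i) x₁ with hz
  have hTnz : zpowProd T n z = zpowProd T (mfun i) (zpowProd T n x₁) :=
    zpowProd_swap T hT_comm n (mfun i) x₁
  have hdz : dist z (zpowProd T n z) < δ₀ := by
    rw [hTnz]
    calc dist z (zpowProd T (mfun i) (zpowProd T n x₁))
        ≤ dist z x₀ + dist x₀ (zpowProd T (mfun i) (zpowProd T n x₁)) := dist_triangle _ _ _
      _ < δ₀/2 + δ₀/2 := add_lt_add hi1 (by rw [dist_comm]; exact hi2)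
      _ = δ₀ := by ring
  -- Step 8: move z into U using the finite cover
  have hzC := hF (Set.mem_univ z)
  rw [Set.mem_iUnion₂] at hzC
  obtain ⟨g, hgF, hgz⟩ := hzC
  rw [Set.mem_preimage, Metric.mem_ball] at hgz
  set w := zpowProd T g z with hw
  have hwU : w ∈ U := hballU (Metric.mem_ball.mpr (lt_of_lt_of_le hgz (by linarith)))
  have hδ₀le : δ₀ ≤ δf g := Finset.inf'_le δf hgF
  have hclose : dist (zpowProd T g z) (zpowProd T g (zpowProd T n z)) < ε/2 :=
    hδ g z (zpowProd T n z) (lt_of_lt_of_le hdz hδ₀le)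
  have hTnw : zpowProd T g (zpowProd T n z) = zpowProd T n w :=
    zpowProd_swap T hT_comm g n z
  have hTnwU : zpowProd T n w ∈ U := by
    apply hballU
    rw [Metric.mem_ball]
    calc dist (zpowProd T n w) x₀
        ≤ dist (zpowProd T n w) w + dist w x₀ := dist_triangle _ _ _
      _ < ε/2 + ε/2 := add_lt_add (by rw [← hTnw, dist_comm]; exact hclose) hgz
      _ = ε := by ring
  exact ⟨n, hnR, w, hwU, zpowProd T n w, hTnwU, zpowProd_neg_apply T hT_comm n w⟩
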